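/- (Lemma 4: multi-obstacle safety and monotonicity.) Assume the obstacles satisfy ‖q_i − q_j‖ > Δ_i + Δ_j for all i ≠ j and each activation radius satisfies Δ_i < λ_i < min_{j ≠ i}(‖q_i − q_j‖ − Δ_j). Let ξ : [0,∞) → ℝ^p be continuously differentiable with ξ'(t) = μ(ξ(t)) for all t ≥ 0 and ξ(0) = ξ_0 satisfying ‖ξ_0 − q_i‖ ≥ Δ_i for all i ∈ {1,…,N}. Then ‖ξ(t) − q_i‖ ≥ Δ_i for all i and all t ≥ 0, and the map t ↦ ‖ξ(t)‖ is nonincreasing. -/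

import Mathlib

open scoped RealInnerProductSpace
open Classical

noncomputable def sc (c r : ℝ) : ℝ :=
  if r ≤ c then c ^ ((2:ℝ)/3) * r ^ ((1:ℝ)/3) else r

noncomputable def nuS (c : ℝ) {p : ℕ} (ξ : EuclideanSpace ℝ (Fin p)) :
    EuclideanSpace ℝ (Fin p) :=
  if ξ = 0 then 0 else (-(sc c ‖ξ‖)⁻¹) • ξ

noncomputable def proj {p : ℕ} (z v : EuclideanSpace ℝ (Fin p)) :
    EuclideanSpace ℝ (Fin p) :=
  v - (⟪z, v⟫ / ‖z‖ ^ 2) • z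

noncomputable def nuA (c : ℝ) {p : ℕ} (q ξ : EuclideanSpace ℝ (Fin p)) :
    EuclideanSpace ℝ (Fin p) :=
  proj (ξ - q) (nuS c ξ)

noncomputable def sigmaQ {p : ℕ} (q ξ : EuclideanSpace ℝ (Fin p)) : ℝ :=
  max 0 (min (⟪ξ, ξ - q⟫ + 1) 1)

noncomputable def alphaS {p : ℕ} (q : EuclideanSpace ℝ (Fin p)) (Δ lam : ℝ)
    (ξ : EuclideanSpace ℝ (Fin p)) : ℝ :=
  max 0 (min ((‖ξ - q‖ - Δ * sigmaQ q ξ) / (lam - Δ)) 1)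

noncomputable def alphaA {p : ℕ} (q : EuclideanSpace ℝ (Fin p)) (Δ lam : ℝ)
    (ξ : EuclideanSpace ℝ (Fin p)) : ℝ :=
  sigmaQ q ξ * (1 - alphaS q Δ lam ξ)

noncomputable def mu (c : ℝ) {p : ℕ} (q : EuclideanSpace ℝ (Fin p)) (Δ lam : ℝ)
    (ξ : EuclideanSpace ℝ (Fin p)) : EuclideanSpace ℝ (Fin p) :=
  alphaS q Δ lam ξ • nuS c ξ + alphaA q Δ lam ξ • nuA c q ξ

noncomputable def muMulti (c : ℝ) {p N : ℕ} (q : Fin N → EuclideanSpace ℝ (Fin p))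
    (Δ lam : Fin N → ℝ) (ξ : EuclideanSpace ℝ (Fin p)) : EuclideanSpace ℝ (Fin p) :=
  (∏ i, alphaS (q i) (Δ i) (lam i) ξ) • nuS c ξ
    + ∑ i, alphaA (q i) (Δ i) (lam i) ξ • nuA c (q i) ξ

-- Aux lemmas
lemma sc_nonneg (c : ℝ) (hc : 0 < c) (r : ℝ) (hr : 0 ≤ r) : 0 ≤ sc c r := by
  unfold sc; split
  · positivity
  · exact hr

lemma sigmaQ_nonneg {p : ℕ} (q ξ : EuclideanSpace ℝ (Fin p)) : 0 ≤ sigmaQ q ξ :=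
  le_max_left _ _

lemma sigmaQ_le_one {p : ℕ} (q ξ : EuclideanSpace ℝ (Fin p)) : sigmaQ q ξ ≤ 1 :=
  max_le zero_le_one (min_le_right _ _)

lemma alphaS_nonneg {p : ℕ} (q : EuclideanSpace ℝ (Fin p)) (Δ lam : ℝ)
    (ξ : EuclideanSpace ℝ (Fin p)) : 0 ≤ alphaS q Δ lam ξ := le_max_left _ _

lemma alphaS_le_one {p : ℕ} (q : EuclideanSpace ℝ (Fin p)) (Δ lam : ℝ)
    (ξ : EuclideanSpace ℝ (Fin p)) : alphaS q Δ lam ξ ≤ 1 :=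
  max_le zero_le_one (min_le_right _ _)

lemma alphaA_nonneg {p : ℕ} (q : EuclideanSpace ℝ (Fin p)) (Δ lam : ℝ)
    (ξ : EuclideanSpace ℝ (Fin p)) : 0 ≤ alphaA q Δ lam ξ :=
  mul_nonneg (sigmaQ_nonneg _ _) (by linarith [alphaS_le_one q Δ lam ξ])

lemma inner_nuS (c : ℝ) {p : ℕ} (z ξ : EuclideanSpace ℝ (Fin p)) :
    ⟪z, nuS c ξ⟫ = -((sc c ‖ξ‖)⁻¹ * ⟪z, ξ⟫) := by
  unfold nuS
  split
  · rename_i h; simp [h]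
  · rw [inner_smul_right]; ring

lemma inner_proj {p : ℕ} (x z v : EuclideanSpace ℝ (Fin p)) :
    ⟪x, proj z v⟫ = ⟪x, v⟫ - (⟪z, v⟫ / ‖z‖ ^ 2) * ⟪x, z⟫ := by
  unfold proj
  rw [inner_sub_right, inner_smul_right]

lemma inner_self_proj {p : ℕ} (z v : EuclideanSpace ℝ (Fin p)) :
    ⟪z, proj z v⟫ = 0 := by
  rcases eq_or_ne z 0 with h | h
  · simp [inner_proj, h]
  · rw [inner_proj, real_inner_self_eq_norm_sq]
    have : ‖z‖ ^ 2 ≠ 0 := pow_ne_zero 2 (norm_ne_zero_iff.mpr h)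
    field_simp
    ring

lemma inner_self_nuS_nonpos (c : ℝ) (hc : 0 < c) {p : ℕ}
    (ξ : EuclideanSpace ℝ (Fin p)) : ⟪ξ, nuS c ξ⟫ ≤ 0 := by
  rw [inner_nuS c, real_inner_self_eq_norm_sq]
  have h1 : 0 ≤ (sc c ‖ξ‖)⁻¹ := inv_nonneg.mpr (sc_nonneg c hc _ (norm_nonneg _))
  nlinarith [sq_nonneg ‖ξ‖]

lemma inner_nuA_nonpos (c : ℝ) (hc : 0 < c) {p : ℕ}
    (q ξ : EuclideanSpace ℝ (Fin p)) : ⟪ξ, nuA c q ξ⟫ ≤ 0 := by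
  unfold nuA
  rw [inner_proj, inner_nuS c, inner_nuS c]
  have ha : 0 ≤ (sc c ‖ξ‖)⁻¹ := inv_nonneg.mpr (sc_nonneg c hc _ (norm_nonneg _))
  rcases eq_or_ne (ξ - q) 0 with h | h
  · rw [h]
    simp only [inner_zero_left, inner_zero_right, mul_zero, neg_zero, zero_div, zero_mul,
      sub_zero, mul_zero]
    rw [real_inner_self_eq_norm_sq]
    nlinarith [sq_nonneg ‖ξ‖]
  · have hz : (0:ℝ) < ‖ξ - q‖ ^ 2 := pow_pos (norm_pos_iff.mpr h) 2
    have cs := real_inner_mul_inner_self_le ξ (ξ - q)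
    rw [real_inner_self_eq_norm_sq, real_inner_self_eq_norm_sq] at cs
    rw [real_inner_self_eq_norm_sq, real_inner_comm ξ (ξ - q)]
    have key : ⟪ξ, ξ - q⟫ * ⟪ξ, ξ - q⟫ / ‖ξ - q‖ ^ 2 ≤ ‖ξ‖ ^ 2 := by
      rw [div_le_iff₀ hz]; nlinarith
    have key2 : (sc c ‖ξ‖)⁻¹ * (⟪ξ, ξ - q⟫ * ⟪ξ, ξ - q⟫ / ‖ξ - q‖ ^ 2)
        ≤ (sc c ‖ξ‖)⁻¹ * ‖ξ‖ ^ 2 := mul_le_mul_of_nonneg_left key ha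
    have final : -((sc c ‖ξ‖)⁻¹ * ‖ξ‖ ^ 2) - -((sc c ‖ξ‖)⁻¹ * ⟪ξ, ξ - q⟫) / ‖ξ - q‖ ^ 2 * ⟪ξ, ξ - q⟫
        = (sc c ‖ξ‖)⁻¹ * (⟪ξ, ξ - q⟫ * ⟪ξ, ξ - q⟫ / ‖ξ - q‖ ^ 2) - (sc c ‖ξ‖)⁻¹ * ‖ξ‖ ^ 2 := by
      ring
    rw [final]
    linarith [key2]

lemma lemA (c : ℝ) (hc : 0 < c) {p N : ℕ} (q : Fin N → EuclideanSpace ℝ (Fin p))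
    (Δ lam : Fin N → ℝ) (ξ : EuclideanSpace ℝ (Fin p)) :
    ⟪ξ, muMulti c q Δ lam ξ⟫ ≤ 0 := by
  unfold muMulti
  rw [inner_add_right, inner_smul_right, inner_sum]
  have h1 : (∏ i, alphaS (q i) (Δ i) (lam i) ξ) * ⟪ξ, nuS c ξ⟫ ≤ 0 :=
    mul_nonpos_of_nonneg_of_nonpos
      (Finset.prod_nonneg fun i _ => alphaS_nonneg _ _ _ _)
      (inner_self_nuS_nonpos c hc ξ)
  have h2 : ∑ i, ⟪ξ, alphaA (q i) (Δ i) (lam i) ξ • nuA c (q i) ξ⟫ ≤ 0 := by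
    apply Finset.sum_nonpos
    intro i _
    rw [inner_smul_right]
    exact mul_nonpos_of_nonneg_of_nonpos (alphaA_nonneg _ _ _ _)
      (inner_nuA_nonpos c hc _ _)
  linarith

lemma lemB (c : ℝ) (hc : 0 < c) {p N : ℕ} (q : Fin N → EuclideanSpace ℝ (Fin p))
    (Δ lam : Fin N → ℝ) (hΔ : ∀ i, 0 < Δ i) (hlam₁ : ∀ i, Δ i < lam i)
    (hlam₂ : ∀ i j, j ≠ i → lam i < ‖q i - q j‖ - Δ j)
    (i : Fin N) (ξ : EuclideanSpace ℝ (Fin p)) (hnear : ‖ξ - q i‖ ≤ Δ i) :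
    0 ≤ ⟪ξ - q i, muMulti c q Δ lam ξ⟫ := by
  unfold muMulti
  rw [inner_add_right, inner_smul_right, inner_sum]
  have hsum : ∑ j, ⟪ξ - q i, alphaA (q j) (Δ j) (lam j) ξ • nuA c (q j) ξ⟫ = 0 := by
    apply Finset.sum_eq_zero
    intro j _
    rw [inner_smul_right]
    rcases eq_or_ne j i with rfl | hji
    · rw [show nuA c (q j) ξ = proj (ξ - q j) (nuS c ξ) from rfl, inner_self_proj, mul_zero]
    · have hd : (0:ℝ) < lam j - Δ j := sub_pos.mpr (hlam₁ j)
      have hnorm : lam j ≤ ‖ξ - q j‖ := by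
        have h2 := hlam₂ j i hji.symm
        have tri : ‖q j - q i‖ ≤ ‖q j - ξ‖ + ‖ξ - q i‖ := norm_sub_le_norm_sub_add_norm_sub _ _ _
        have e : ‖q j - ξ‖ = ‖ξ - q j‖ := norm_sub_rev _ _
        linarith
      have hX : 1 ≤ (‖ξ - q j‖ - Δ j * sigmaQ (q j) ξ) / (lam j - Δ j) := by
        rw [le_div_iff₀ hd]
        nlinarith [mul_le_of_le_one_right (hΔ j).le (sigmaQ_le_one (q j) ξ)]
      have hαs1 : alphaS (q j) (Δ j) (lam j) ξ = 1 := by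
        unfold alphaS
        rw [min_eq_right hX, max_eq_right zero_le_one]
      unfold alphaA
      rw [hαs1]
      ring
  rw [hsum, add_zero]
  rcases le_or_gt ⟪ξ, ξ - q i⟫ 0 with hip | hip
  · have hns : 0 ≤ ⟪ξ - q i, nuS c ξ⟫ := by
      rw [inner_nuS c, real_inner_comm ξ (ξ - q i)]
      have ha : 0 ≤ (sc c ‖ξ‖)⁻¹ := inv_nonneg.mpr (sc_nonneg c hc _ (norm_nonneg _))
      nlinarith
    exact mul_nonneg (Finset.prod_nonneg fun j _ => alphaS_nonneg _ _ _ _) hns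
  · have hσ : sigmaQ (q i) ξ = 1 := by
      unfold sigmaQ
      rw [min_eq_right (by linarith), max_eq_right zero_le_one]
    have hαs : alphaS (q i) (Δ i) (lam i) ξ = 0 := by
      unfold alphaS
      have hd : (0:ℝ) < lam i - Δ i := sub_pos.mpr (hlam₁ i)
      have hnum : (‖ξ - q i‖ - Δ i * sigmaQ (q i) ξ) / (lam i - Δ i) ≤ 0 := by
        apply div_nonpos_of_nonpos_of_nonneg _ hd.le
        rw [hσ]; linarith
      exact max_eq_left (le_trans (min_le_left _ _) hnum)
    rw [Finset.prod_eq_zero (Finset.mem_univ i) hαs, zero_mul]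

theorem stmt12 (p N : ℕ) (hp : 1 ≤ p) (c : ℝ) (hc : 0 < c)
    (q : Fin N → EuclideanSpace ℝ (Fin p)) (Δ lam : Fin N → ℝ)
    (hΔ : ∀ i, 0 < Δ i)
    (hsep : ∀ i j, i ≠ j → Δ i + Δ j < ‖q i - q j‖)
    (hlam₁ : ∀ i, Δ i < lam i)
    (hlam₂ : ∀ i j, j ≠ i → lam i < ‖q i - q j‖ - Δ j)
    (ξ : ℝ → EuclideanSpace ℝ (Fin p)) (ξ₀ : EuclideanSpace ℝ (Fin p))
    (hinit : ξ 0 = ξ₀) (hsafe0 : ∀ i, Δ i ≤ ‖ξ₀ - q i‖)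
    (hode : ∀ t ∈ Set.Ici (0:ℝ), HasDerivAt ξ (muMulti c q Δ lam (ξ t)) t)
    (hderiv_cont : ContinuousOn (fun t => muMulti c q Δ lam (ξ t)) (Set.Ici (0:ℝ))) :
    (∀ i, ∀ t ∈ Set.Ici (0:ℝ), Δ i ≤ ‖ξ t - q i‖) ∧
    AntitoneOn (fun t => ‖ξ t‖) (Set.Ici (0:ℝ)) := by
  constructor
  · intro i
    by_contra hcon
    push_neg at hcon
    obtain ⟨t2, ht2, hlt⟩ := hcon
    set h : ℝ → ℝ := fun t => ⟪ξ t - q i, ξ t - q i⟫ with hh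
    have hder : ∀ t ∈ Set.Ici (0:ℝ),
        HasDerivAt h (2 * ⟪ξ t - q i, muMulti c q Δ lam (ξ t)⟫) t := by
      intro t ht
      have h1 := (hode t ht).sub_const (q i)
      have h2 := HasDerivAt.inner ℝ h1 h1
      rw [real_inner_comm (ξ t - q i) (muMulti c q Δ lam (ξ t))] at h2
      exact h2.congr_deriv (by ring)
    have h0 : (Δ i)^2 ≤ h 0 := by
      rw [hh]
      simp only [real_inner_self_eq_norm_sq, hinit]
      exact pow_le_pow_left₀ (hΔ i).le (hsafe0 i) 2
    have ht2' : h t2 < (Δ i)^2 := by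
      rw [hh]
      simp only [real_inner_self_eq_norm_sq]
      exact pow_lt_pow_left₀ hlt (norm_nonneg _) two_ne_zero
    set S : Set ℝ := Set.Icc 0 t2 ∩ h ⁻¹' Set.Ici ((Δ i)^2) with hS
    have hcontIci : ContinuousOn h (Set.Ici (0:ℝ)) :=
      fun t ht => ((hder t ht).continuousAt).continuousWithinAt
    have hScl : IsClosed S :=
      ContinuousOn.preimage_isClosed_of_isClosed
        (hcontIci.mono (Set.Icc_subset_Ici_self)) isClosed_Icc isClosed_Ici
    have hScomp : IsCompact S :=
      IsCompact.of_isClosed_subset isCompact_Icc hScl Set.inter_subset_left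
    have hne : S.Nonempty := ⟨0, ⟨le_rfl, ht2⟩, h0⟩
    set t1 := sSup S with ht1
    have ht1S : t1 ∈ S := hScomp.sSup_mem hne
    obtain ⟨⟨ht10, ht1t2⟩, ht1h⟩ := ht1S
    have ht1h : (Δ i)^2 ≤ h t1 := ht1h
    have ht1lt : t1 < t2 := by
      rcases lt_or_eq_of_le ht1t2 with hl | he
      · exact hl
      · exfalso; rw [he] at ht1h; linarith
    have hIoo : ∀ t ∈ Set.Ioo t1 t2, h t < (Δ i)^2 := by
      intro t htm
      by_contra hge
      push_neg at hge
      have : t ∈ S := ⟨⟨le_trans ht10 htm.1.le, htm.2.le⟩, hge⟩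
      have := le_csSup hScomp.bddAbove this
      linarith [htm.1]
    have hmono : MonotoneOn h (Set.Icc t1 t2) := by
      apply monotoneOn_of_deriv_nonneg (convex_Icc t1 t2)
      · exact hcontIci.mono (fun x hx => le_trans ht10 hx.1)
      · intro x hx
        rw [interior_Icc] at hx
        have hx0 : x ∈ Set.Ici (0:ℝ) := le_trans ht10 hx.1.le
        exact ((hder x hx0).differentiableAt).differentiableWithinAt
      · intro x hx
        rw [interior_Icc] at hx
        have hx0 : x ∈ Set.Ici (0:ℝ) := le_trans ht10 hx.1.le
        rw [(hder x hx0).deriv]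
        have hnear : ‖ξ x - q i‖ ≤ Δ i := by
          have h1 := hIoo x hx
          rw [hh] at h1
          simp only [real_inner_self_eq_norm_sq] at h1
          nlinarith [norm_nonneg (ξ x - q i), (hΔ i).le]
        have := lemB c hc q Δ lam hΔ hlam₁ hlam₂ i (ξ x) hnear
        linarith
    have := hmono ⟨le_rfl, ht1t2⟩ ⟨ht1t2, le_rfl⟩ ht1t2
    linarith
  · set g : ℝ → ℝ := fun t => ⟪ξ t, ξ t⟫ with hg
    have gder : ∀ t ∈ Set.Ici (0:ℝ),
        HasDerivAt g (2 * ⟪ξ t, muMulti c q Δ lam (ξ t)⟫) t := by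
      intro t ht
      have h2 := HasDerivAt.inner ℝ (hode t ht) (hode t ht)
      rw [real_inner_comm (ξ t) (muMulti c q Δ lam (ξ t))] at h2
      exact h2.congr_deriv (by ring)
    have gmono : AntitoneOn g (Set.Ici 0) := by
      apply antitoneOn_of_deriv_nonpos (convex_Ici 0)
      · exact fun t ht => ((gder t ht).continuousAt).continuousWithinAt
      · intro x hx
        rw [interior_Ici] at hx
        exact ((gder x (Set.mem_Ici.mpr hx.le)).differentiableAt).differentiableWithinAt
      · intro x hx
        rw [interior_Ici] at hx
        rw [(gder x (Set.mem_Ici.mpr hx.le)).deriv]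
        linarith [lemA c hc q Δ lam (ξ x)]
    intro s hs t ht hst
    have h1 := gmono hs ht hst
    rw [hg] at h1
    simp only [real_inner_self_eq_norm_sq] at h1
    simp only []
    nlinarith [norm_nonneg (ξ s), norm_nonneg (ξ t)]
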